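/- Let X_1,...,X_n be 1-dependent complex/real random variables with finite exponential moments at u, let φ_1(u) = E e^{uX_1}, Y_k = e^{uX_k} − 1, and suppose φ_j(u) ≠ 0 for all j < k. Then the moment generating function factorizes as E e^{u(X_1+⋯+X_n)} = φ_1(u)⋯φ_n(u), where for k ≥ 2, φ_k(u) = 1 + E Y_k + Σ_{j=1}^{k-1} Ê(Y_j, Y_{j+1},...,Y_k)/(φ_j(u) φ_{j+1}(u) ⋯ φ_{k-1}(u)). -/

import Mathlib

open MeasureTheory Finset

/-- Heinrich's mixed cumulant functional Ê: `heinrichE μ Y k` corresponds to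
`Ê(Y 0, Y 1, ..., Y k)` (so `k+1` variables). -/
noncomputable def heinrichE {Ω : Type*} [MeasurableSpace Ω] (μ : Measure Ω)
    (Y : ℕ → Ω → ℂ) : ℕ → ℂ
  | k =>
    (∫ ω, ∏ m ∈ Finset.range (k + 1), Y m ω ∂μ) -
      ∑ j ∈ (Finset.range k).attach,
        heinrichE μ Y j.1 * ∫ ω, ∏ m ∈ Finset.Icc (j.1 + 1) k, Y m ω ∂μ
  termination_by k => k
  decreasing_by exact Finset.mem_range.mp j.2

/-- The sequence `X` is 1-dependent. -/
def OneDependent {Ω : Type*} [MeasurableSpace Ω] (μ : Measure Ω) (X : ℕ → Ω → ℝ) : Prop :=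
  ∀ s t : ℕ, s + 1 < t →
    ProbabilityTheory.Indep
      (⨆ i ∈ Finset.range (s + 1), MeasurableSpace.comap (X i) inferInstance)
      (⨆ i : ℕ, MeasurableSpace.comap (X (t + i)) inferInstance) μ

/-- Heinrich's recursively defined factors `φ_k(u)` (0-indexed): `heinrichPhi μ X u 0 = E e^{u X 0}`
and for `k ≥ 1`,
`φ_k = 1 + E Y_k + ∑_{j=0}^{k-1} Ê(Y_j, ..., Y_k) / (φ_j ⋯ φ_{k-1})` where `Y_i = e^{u X_i} - 1`. -/
noncomputable def heinrichPhi {Ω : Type*} [MeasurableSpace Ω] (μ : Measure Ω)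
    (X : ℕ → Ω → ℝ) (u : ℂ) : ℕ → ℂ
  | 0 => ∫ ω, Complex.exp (u * X 0 ω) ∂μ
  | (k + 1) =>
    1 + (∫ ω, (Complex.exp (u * X (k + 1) ω) - 1) ∂μ) +
      ∑ j ∈ (Finset.range (k + 1)).attach,
        heinrichE μ (fun i ω => Complex.exp (u * X (j.1 + i) ω) - 1) (k + 1 - j.1) /
          ∏ l ∈ (Finset.Icc j.1 k).attach, heinrichPhi μ X u l.1
  termination_by k => k
  decreasing_by exact Nat.lt_succ_of_le (Finset.mem_Icc.mp l.2).2

section Aux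

open ProbabilityTheory

lemma heinrich_cmul {Ω : Type*} [MeasurableSpace Ω] {μ : Measure Ω} {f g : Ω → ℂ}
    (h : IndepFun f g μ) (hf : Integrable f μ) (hg : Integrable g μ) :
    ∫ ω, f ω * g ω ∂μ = (∫ ω, f ω ∂μ) * ∫ ω, g ω ∂μ := by
  have hfg : Integrable (f * g) μ := h.integrable_mul hf hg
  have h1 : IndepFun (fun ω => (f ω).re) (fun ω => (g ω).re) μ :=
    h.comp Complex.measurable_re Complex.measurable_re
  have h2 : IndepFun (fun ω => (f ω).re) (fun ω => (g ω).im) μ :=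
    h.comp Complex.measurable_re Complex.measurable_im
  have h3 : IndepFun (fun ω => (f ω).im) (fun ω => (g ω).re) μ :=
    h.comp Complex.measurable_im Complex.measurable_re
  have h4 : IndepFun (fun ω => (f ω).im) (fun ω => (g ω).im) μ :=
    h.comp Complex.measurable_im Complex.measurable_im
  have i1 : Integrable (fun ω => (f ω).re) μ := hf.re
  have i2 : Integrable (fun ω => (f ω).im) μ := hf.im
  have i3 : Integrable (fun ω => (g ω).re) μ := hg.re
  have i4 : Integrable (fun ω => (g ω).im) μ := hg.im
  have j1 : Integrable (fun x => (f x).re * (g x).re) μ := h1.integrable_mul i1 i3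
  have j2 : Integrable (fun x => (f x).re * (g x).im) μ := h2.integrable_mul i1 i4
  have j3 : Integrable (fun x => (f x).im * (g x).re) μ := h3.integrable_mul i2 i3
  have j4 : Integrable (fun x => (f x).im * (g x).im) μ := h4.integrable_mul i2 i4
  have e1 : ∫ x, (f x).re * (g x).re ∂μ = (∫ ω, (f ω).re ∂μ) * ∫ ω, (g ω).re ∂μ :=
    h1.integral_fun_mul_eq_mul_integral i1.1 i3.1
  have e2 : ∫ x, (f x).re * (g x).im ∂μ = (∫ ω, (f ω).re ∂μ) * ∫ ω, (g ω).im ∂μ :=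
    h2.integral_fun_mul_eq_mul_integral i1.1 i4.1
  have e3 : ∫ x, (f x).im * (g x).re ∂μ = (∫ ω, (f ω).im ∂μ) * ∫ ω, (g ω).re ∂μ :=
    h3.integral_fun_mul_eq_mul_integral i2.1 i3.1
  have e4 : ∫ x, (f x).im * (g x).im ∂μ = (∫ ω, (f ω).im ∂μ) * ∫ ω, (g ω).im ∂μ :=
    h4.integral_fun_mul_eq_mul_integral i2.1 i4.1
  have rf := integral_re (μ := μ) hf
  have rg := integral_re (μ := μ) hg
  have mf := integral_im (μ := μ) hf
  have mg := integral_im (μ := μ) hg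
  simp only [RCLike.re_to_complex, RCLike.im_to_complex] at rf rg mf mg
  apply Complex.ext
  · have := integral_re (μ := μ) (f := f * g) hfg
    simp only [RCLike.re_to_complex, Pi.mul_apply, Complex.mul_re] at this
    rw [← this, integral_sub j1 j4, e1, e4, Complex.mul_re, ← rf, ← rg, ← mf, ← mg]
  · have := integral_im (μ := μ) (f := f * g) hfg
    simp only [RCLike.im_to_complex, Pi.mul_apply, Complex.mul_im] at this
    rw [← this, integral_add j2 j3, e2, e3, Complex.mul_im, ← rf, ← rg, ← mf, ← mg]

variable {Ω : Type*} [MeasurableSpace Ω] (μ : Measure Ω) (X : ℕ → Ω → ℝ) (u : ℂ)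

/-- `E ∏_{k < n} e^{u X_k}`. -/
noncomputable def hS (n : ℕ) : ℂ := ∫ ω, ∏ k ∈ Finset.range n, Complex.exp (u * X k ω) ∂μ

/-- `E ∏_{k ∈ s} (e^{u X_k} - 1)`. -/
noncomputable def hE (s : Finset ℕ) : ℂ := ∫ ω, ∏ k ∈ s, (Complex.exp (u * X k ω) - 1) ∂μ

/-- `Ê(Y_j, ..., Y_{j+k})`. -/
noncomputable def Ehat (j k : ℕ) : ℂ :=
  heinrichE μ (fun i ω => Complex.exp (u * X (j + i) ω) - 1) k

lemma intMix (hint : ∀ s : Finset ℕ, Integrable (fun ω => ∏ k ∈ s, Complex.exp (u * X k ω)) μ)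
    (s t : Finset ℕ) (hd : Disjoint s t) :
    Integrable (fun ω => (∏ k ∈ s, Complex.exp (u * X k ω)) *
      ∏ k ∈ t, (Complex.exp (u * X k ω) - 1)) μ := by
  have key : (fun ω => (∏ k ∈ s, Complex.exp (u * X k ω)) *
      ∏ k ∈ t, (Complex.exp (u * X k ω) - 1)) =
      fun ω => ∑ r ∈ t.powerset,
        (∏ k ∈ s ∪ r, Complex.exp (u * X k ω)) * (-1 : ℂ) ^ (t \ r).card := by
    funext ω
    have : ∏ k ∈ t, (Complex.exp (u * X k ω) - 1) =
        ∑ r ∈ t.powerset, (∏ k ∈ r, Complex.exp (u * X k ω)) * (-1 : ℂ) ^ (t \ r).card := by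
      simp_rw [sub_eq_add_neg]
      rw [Finset.prod_add]
      exact Finset.sum_congr rfl fun r _ => by rw [Finset.prod_const]
    rw [this, Finset.mul_sum]
    refine Finset.sum_congr rfl fun r hr => ?_
    rw [← mul_assoc, ← Finset.prod_union (hd.mono_right (Finset.mem_powerset.mp hr))]
  rw [key]
  exact integrable_finset_sum _ fun r _ => (hint (s ∪ r)).mul_const _

lemma intY (hint : ∀ s : Finset ℕ, Integrable (fun ω => ∏ k ∈ s, Complex.exp (u * X k ω)) μ)
    (t : Finset ℕ) :
    Integrable (fun ω => ∏ k ∈ t, (Complex.exp (u * X k ω) - 1)) μ := by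
  have := intMix μ X u hint ∅ t (Finset.disjoint_empty_left t)
  simpa using this

lemma hstep [IsProbabilityMeasure μ] (hmeas : ∀ k, Measurable (X k))
    (hint : ∀ s : Finset ℕ, Integrable (fun ω => ∏ k ∈ s, Complex.exp (u * X k ω)) μ)
    (hdep : OneDependent μ X) (m a b : ℕ) (ha : m + 1 ≤ a) :
    ∫ ω, (∏ k ∈ Finset.range m, Complex.exp (u * X k ω)) *
        ∏ k ∈ Finset.Icc a b, (Complex.exp (u * X k ω) - 1) ∂μ
      = hS μ X u m * hE μ X u (Finset.Icc a b) := by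
  rcases Nat.eq_zero_or_pos m with rfl | hm
  · simp only [Finset.range_zero, Finset.prod_empty, one_mul, hS, hE]
    simp
  · have hrm : (m - 1) + 1 = m := by omega
    have hI : ProbabilityTheory.Indep
        (⨆ i ∈ Finset.range m, MeasurableSpace.comap (X i) inferInstance)
        (⨆ i : ℕ, MeasurableSpace.comap (X (a + i)) inferInstance) μ := by
      have := hdep (m - 1) a (by omega)
      rwa [hrm] at this
    have hf : Measurable[⨆ i ∈ Finset.range m, MeasurableSpace.comap (X i) inferInstance]
        fun ω => ∏ k ∈ Finset.range m, Complex.exp (u * X k ω) := by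
      apply Finset.measurable_prod
      intro k hk
      have hle : MeasurableSpace.comap (X k) inferInstance ≤
          ⨆ i ∈ Finset.range m, MeasurableSpace.comap (X i) inferInstance :=
        le_biSup (f := fun i => MeasurableSpace.comap (X i) inferInstance) hk
      have hXk := measurable_iff_comap_le.mpr hle
      exact ((Complex.measurable_ofReal.comp hXk).const_mul u).cexp
    have hg : Measurable[⨆ i : ℕ, MeasurableSpace.comap (X (a + i)) inferInstance]
        fun ω => ∏ k ∈ Finset.Icc a b, (Complex.exp (u * X k ω) - 1) := by
      apply Finset.measurable_prod
      intro k hk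
      have hak : a ≤ k := (Finset.mem_Icc.mp hk).1
      have hle : MeasurableSpace.comap (X k) inferInstance ≤
          ⨆ i : ℕ, MeasurableSpace.comap (X (a + i)) inferInstance := by
        have := le_iSup (fun i => MeasurableSpace.comap (X (a + i)) inferInstance) (k - a)
        rwa [Nat.add_sub_cancel' hak] at this
      have hXk := measurable_iff_comap_le.mpr hle
      have h1 := ((Complex.measurable_ofReal.comp hXk).const_mul u).cexp
      exact (measurable_sub_const (1 : ℂ)).comp h1
    have hind : IndepFun (fun ω => ∏ k ∈ Finset.range m, Complex.exp (u * X k ω))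
        (fun ω => ∏ k ∈ Finset.Icc a b, (Complex.exp (u * X k ω) - 1)) μ :=
      indep_of_indep_of_le_right
        (indep_of_indep_of_le_left hI (measurable_iff_comap_le.mp hf))
        (measurable_iff_comap_le.mp hg)
    exact heinrich_cmul hind (hint (Finset.range m)) (intY μ X u hint _)

lemma gRec [IsProbabilityMeasure μ] (hmeas : ∀ k, Measurable (X k))
    (hint : ∀ s : Finset ℕ, Integrable (fun ω => ∏ k ∈ s, Complex.exp (u * X k ω)) μ)
    (hdep : OneDependent μ X) (N : ℕ) :
    ∀ m, m ≤ N →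
      ∫ ω, (∏ k ∈ Finset.range m, Complex.exp (u * X k ω)) *
          ∏ k ∈ Finset.Icc m N, (Complex.exp (u * X k ω) - 1) ∂μ
        = ∑ j ∈ Finset.range (m + 1), hS μ X u (j - 1) * hE μ X u (Finset.Icc j N) := by
  intro m
  induction m with
  | zero =>
    intro _
    simp only [Finset.range_zero, Finset.prod_empty, one_mul, Finset.range_one,
      Finset.sum_singleton, Nat.zero_sub]
    simp only [hE, hS]
    simp
  | succ m ih =>
    intro hmN
    have hmN' : m ≤ N := by omega
    have hsplit : (fun ω => (∏ k ∈ Finset.range (m + 1), Complex.exp (u * X k ω)) *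
        ∏ k ∈ Finset.Icc (m + 1) N, (Complex.exp (u * X k ω) - 1)) =
        fun ω => (∏ k ∈ Finset.range m, Complex.exp (u * X k ω)) *
            ∏ k ∈ Finset.Icc (m + 1) N, (Complex.exp (u * X k ω) - 1) +
          (∏ k ∈ Finset.range m, Complex.exp (u * X k ω)) *
            ∏ k ∈ Finset.Icc m N, (Complex.exp (u * X k ω) - 1) := by
      funext ω
      have hins : Finset.Icc m N = insert m (Finset.Icc (m + 1) N) := by
        rw [Finset.Icc_add_one_left_eq_Ioc, Finset.Ioc_insert_left hmN']
      rw [Finset.prod_range_succ, hins,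
        Finset.prod_insert (by simp [Finset.mem_Icc])]
      ring
    rw [hsplit, integral_add
        (intMix μ X u hint (Finset.range m) (Finset.Icc (m + 1) N)
          (by simp [Finset.disjoint_left, Finset.mem_Icc]; omega))
        (intMix μ X u hint (Finset.range m) (Finset.Icc m N)
          (by simp [Finset.disjoint_left, Finset.mem_Icc]; omega)),
      hstep μ X u hmeas hint hdep m (m + 1) N le_rfl, ih hmN',
      Finset.sum_range_succ _ (m + 1)]
    simp only [Nat.add_sub_cancel]
    ring

lemma hA [IsProbabilityMeasure μ] (hmeas : ∀ k, Measurable (X k))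
    (hint : ∀ s : Finset ℕ, Integrable (fun ω => ∏ k ∈ s, Complex.exp (u * X k ω)) μ)
    (hdep : OneDependent μ X) (N : ℕ) :
    hS μ X u (N + 1) = hS μ X u N +
      ∑ j ∈ Finset.range (N + 1), hS μ X u (j - 1) * hE μ X u (Finset.Icc j N) := by
  have hsplit : (fun ω => ∏ k ∈ Finset.range (N + 1), Complex.exp (u * X k ω)) =
      fun ω => (∏ k ∈ Finset.range N, Complex.exp (u * X k ω)) +
        (∏ k ∈ Finset.range N, Complex.exp (u * X k ω)) *
          ∏ k ∈ Finset.Icc N N, (Complex.exp (u * X k ω) - 1) := by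
    funext ω
    rw [Finset.prod_range_succ, Finset.Icc_self, Finset.prod_singleton]
    ring
  rw [hS, hsplit, integral_add (hint (Finset.range N))
      (intMix μ X u hint (Finset.range N) (Finset.Icc N N)
        (by simp [Finset.disjoint_left, Finset.mem_Icc]; omega)),
    gRec μ X u hmeas hint hdep N N le_rfl]
  rfl

lemma hB (j k : ℕ) : Ehat μ X u j k = hE μ X u (Finset.Icc j (j + k)) -
    ∑ i ∈ Finset.range k, Ehat μ X u j i * hE μ X u (Finset.Icc (j + i + 1) (j + k)) := by
  rw [Ehat, heinrichE]
  congr 1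
  · rw [hE]
    congr 1
    funext ω
    rw [← Finset.Ico_add_one_right_eq_Icc, Finset.prod_Ico_eq_prod_range]
    have h : j + k + 1 - j = k + 1 := by omega
    rw [h]
  · rw [← Finset.sum_attach (Finset.range k)
      (fun i => Ehat μ X u j i * hE μ X u (Finset.Icc (j + i + 1) (j + k)))]
    refine Finset.sum_congr rfl fun i _ => ?_
    rw [Ehat]
    congr 1
    rw [hE]
    congr 1
    funext ω
    rw [← Finset.Ico_add_one_right_eq_Icc, Finset.prod_Ico_eq_prod_range,
      ← Finset.Ico_add_one_right_eq_Icc, Finset.prod_Ico_eq_prod_range]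
    have h1 : k + 1 - (i.1 + 1) = j + k + 1 - (j + i.1 + 1) := by omega
    rw [← h1]
    refine Finset.prod_congr rfl fun r _ => ?_
    have h2 : j + (i.1 + 1 + r) = j + i.1 + 1 + r := by omega
    rw [h2]

lemma swap_aux {M : Type*} [AddCommMonoid M] (k : ℕ) (f : ℕ → ℕ → M) :
    ∑ j ∈ Finset.range (k + 1), ∑ i ∈ Finset.range (k - j), f j (j + i)
      = ∑ m ∈ Finset.range k, ∑ j ∈ Finset.range (m + 1), f j m := by
  rw [Finset.sum_range_succ]
  simp only [Nat.sub_self, Finset.range_zero, Finset.sum_empty, add_zero]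
  have rhs : ∑ m ∈ Finset.range k, ∑ j ∈ Finset.range (m + 1), f j m
      = ∑ j ∈ Finset.Ico 0 k, ∑ m ∈ Finset.Ico j k, f j m := by
    simp only [Finset.range_eq_Ico]
    exact (Finset.sum_Ico_Ico_comm 0 k f).symm
  rw [rhs, Finset.range_eq_Ico]
  refine Finset.sum_congr rfl fun j hj => ?_
  rw [Finset.sum_Ico_eq_sum_range (fun m => f j m) j k, Finset.range_eq_Ico]

lemma hstar [IsProbabilityMeasure μ] (hmeas : ∀ k, Measurable (X k))
    (hint : ∀ s : Finset ℕ, Integrable (fun ω => ∏ k ∈ s, Complex.exp (u * X k ω)) μ)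
    (hdep : OneDependent μ X) :
    ∀ k, ∑ j ∈ Finset.range (k + 1), hS μ X u j * Ehat μ X u j (k - j)
      = ∑ j ∈ Finset.range (k + 1), hS μ X u (j - 1) * hE μ X u (Finset.Icc j k) := by
  intro k
  induction k using Nat.strong_induction_on with
  | _ k IH =>
  have e1 : ∀ j ∈ Finset.range (k + 1), hS μ X u j * Ehat μ X u j (k - j)
      = hS μ X u j * hE μ X u (Finset.Icc j k) -
        ∑ i ∈ Finset.range (k - j),
          hS μ X u j * (Ehat μ X u j i * hE μ X u (Finset.Icc (j + i + 1) k)) := by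
    intro j hj
    have hjk : j ≤ k := by
      have := Finset.mem_range.mp hj; omega
    have hadd : j + (k - j) = k := by omega
    rw [hB, hadd, mul_sub, Finset.mul_sum]
  rw [Finset.sum_congr rfl e1, Finset.sum_sub_distrib]
  have e2 : ∑ j ∈ Finset.range (k + 1), ∑ i ∈ Finset.range (k - j),
        hS μ X u j * (Ehat μ X u j i * hE μ X u (Finset.Icc (j + i + 1) k))
      = ∑ m ∈ Finset.range k, (hS μ X u (m + 1) - hS μ X u m) * hE μ X u (Finset.Icc (m + 1) k) := by
    have conv1 : ∀ j ∈ Finset.range (k + 1), ∑ i ∈ Finset.range (k - j),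
          hS μ X u j * (Ehat μ X u j i * hE μ X u (Finset.Icc (j + i + 1) k))
        = ∑ i ∈ Finset.range (k - j),
            hS μ X u j * (Ehat μ X u j ((j + i) - j) * hE μ X u (Finset.Icc ((j + i) + 1) k)) := by
      intro j _
      refine Finset.sum_congr rfl fun i _ => ?_
      rw [Nat.add_sub_cancel_left]
    rw [Finset.sum_congr rfl conv1,
      swap_aux k (fun j m => hS μ X u j * (Ehat μ X u j (m - j) * hE μ X u (Finset.Icc (m + 1) k)))]
    refine Finset.sum_congr rfl fun m hm => ?_
    have inner : ∑ j ∈ Finset.range (m + 1),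
          hS μ X u j * (Ehat μ X u j (m - j) * hE μ X u (Finset.Icc (m + 1) k))
        = (∑ j ∈ Finset.range (m + 1), hS μ X u j * Ehat μ X u j (m - j)) *
            hE μ X u (Finset.Icc (m + 1) k) := by
      rw [Finset.sum_mul]
      exact Finset.sum_congr rfl fun j _ => by ring
    rw [inner, IH m (Finset.mem_range.mp hm)]
    have := hA μ X u hmeas hint hdep m
    have hsum : ∑ j ∈ Finset.range (m + 1), hS μ X u (j - 1) * hE μ X u (Finset.Icc j m)
        = hS μ X u (m + 1) - hS μ X u m := by rw [this]; ring
    rw [hsum]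
  rw [e2]
  rw [Finset.sum_range_succ' (fun j => hS μ X u j * hE μ X u (Finset.Icc j k)) k,
    Finset.sum_range_succ' (fun j => hS μ X u (j - 1) * hE μ X u (Finset.Icc j k)) k]
  simp only [Nat.add_sub_cancel, Nat.zero_sub]
  rw [add_sub_right_comm, ← Finset.sum_sub_distrib]
  congr 1
  exact Finset.sum_congr rfl fun m _ => by ring

end Aux

theorem heinrich_factorization {Ω : Type*} [MeasurableSpace Ω] (μ : Measure Ω)
    [IsProbabilityMeasure μ] (X : ℕ → Ω → ℝ) (u : ℂ) (n : ℕ) (hn : 1 ≤ n)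
    (hmeas : ∀ k, Measurable (X k))
    (hint : ∀ s : Finset ℕ, Integrable (fun ω => ∏ k ∈ s, Complex.exp (u * X k ω)) μ)
    (hdep : OneDependent μ X)
    (hphi : ∀ j < n, heinrichPhi μ X u j ≠ 0) :
    (∫ ω, Complex.exp (u * ∑ k ∈ Finset.range n, (X k ω : ℂ)) ∂μ) =
      ∏ k ∈ Finset.range n, heinrichPhi μ X u k := by
  have h0 : (fun ω => Complex.exp (u * ∑ k ∈ Finset.range n, (X k ω : ℂ))) =
      fun ω => ∏ k ∈ Finset.range n, Complex.exp (u * X k ω) := by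
    funext ω
    rw [Finset.mul_sum, Complex.exp_sum]
  have hgoal : (∫ ω, Complex.exp (u * ∑ k ∈ Finset.range n, (X k ω : ℂ)) ∂μ) = hS μ X u n := by
    rw [hS]
    exact congrArg (integral μ) h0
  rw [hgoal]
  have key : ∀ m, m ≤ n → hS μ X u m = ∏ k ∈ Finset.range m, heinrichPhi μ X u k := by
    intro m
    induction m using Nat.strong_induction_on with
    | _ m IH =>
    intro hmn
    match m, IH, hmn with
    | 0, IH, hmn => simp [hS]
    | 1, IH, hmn =>
      simp only [hS, Finset.prod_range_one]
      rw [heinrichPhi]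
    | (t+2), IH, hmn =>
      have hSr : ∀ r, r ≤ t + 1 → hS μ X u r = ∏ k ∈ Finset.range r, heinrichPhi μ X u k :=
        fun r hr => IH r (by omega) (by omega)
      have hSN : hS μ X u (t + 1) = ∏ k ∈ Finset.range (t + 1), heinrichPhi μ X u k :=
        hSr (t + 1) le_rfl
      have hSne : ∀ r, r ≤ t + 1 → hS μ X u r ≠ 0 := by
        intro r hr
        rw [hSr r hr]
        exact Finset.prod_ne_zero_iff.mpr fun l hl =>
          hphi l (by have := Finset.mem_range.mp hl; omega)
      have hprod : ∀ j, j ≤ t → ∏ l ∈ Finset.Icc j t, heinrichPhi μ X u l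
          = hS μ X u (t + 1) / hS μ X u j := by
        intro j hj
        have hIcc : Finset.Icc j t = Finset.Ico j (t + 1) := by rw [Finset.Ico_add_one_right_eq_Icc]
        rw [hIcc, eq_div_iff (hSne j (by omega)), hSr j (by omega), hSN, mul_comm]
        exact Finset.prod_range_mul_prod_Ico _ (by omega)
      rw [Finset.prod_range_succ, ← hSN, heinrichPhi]
      have hattach : ∑ j ∈ (Finset.range (t + 1)).attach,
            heinrichE μ (fun i ω => Complex.exp (u * X (j.1 + i) ω) - 1) (t + 1 - j.1) /
              ∏ l ∈ (Finset.Icc j.1 t).attach, heinrichPhi μ X u l.1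
          = ∑ j ∈ Finset.range (t + 1), Ehat μ X u j (t + 1 - j) /
              (hS μ X u (t + 1) / hS μ X u j) := by
        rw [← Finset.sum_attach (Finset.range (t + 1)) (fun j => Ehat μ X u j (t + 1 - j) /
          (hS μ X u (t + 1) / hS μ X u j))]
        refine Finset.sum_congr rfl fun j _ => ?_
        have hj : j.1 ≤ t := by have := Finset.mem_range.mp j.2; omega
        rw [← hprod j.1 hj, Ehat, Finset.prod_attach (Finset.Icc j.1 t) (heinrichPhi μ X u)]
      rw [hattach]
      have hY : (∫ ω, (Complex.exp (u * X (t + 1) ω) - 1) ∂μ) = Ehat μ X u (t + 1) 0 := by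
        rw [hB]
        simp only [Finset.range_zero, Finset.sum_empty, sub_zero, Nat.add_zero, Finset.Icc_self]
        rw [hE]
        congr 1
        funext ω
        rw [Finset.prod_singleton]
      rw [hY, mul_add, mul_add, mul_one, Finset.mul_sum]
      have hterm : ∀ j ∈ Finset.range (t + 1),
          hS μ X u (t + 1) * (Ehat μ X u j (t + 1 - j) / (hS μ X u (t + 1) / hS μ X u j))
            = hS μ X u j * Ehat μ X u j (t + 1 - j) := by
        intro j hj
        have h1 := hSne j (by have := Finset.mem_range.mp hj; omega)
        have h2 := hSne (t + 1) le_rfl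
        field_simp
      rw [Finset.sum_congr rfl hterm]
      have hss : hS μ X u (t + 1) * Ehat μ X u (t + 1) 0 +
            ∑ j ∈ Finset.range (t + 1), hS μ X u j * Ehat μ X u j (t + 1 - j)
          = ∑ j ∈ Finset.range (t + 2), hS μ X u j * Ehat μ X u j (t + 1 - j) := by
        rw [Finset.sum_range_succ (fun j => hS μ X u j * Ehat μ X u j (t + 1 - j)) (t + 1)]
        rw [Nat.sub_self]
        ring
      have hfin : hS μ X u (t + 1) + hS μ X u (t + 1) * Ehat μ X u (t + 1) 0 +
            ∑ j ∈ Finset.range (t + 1), hS μ X u j * Ehat μ X u j (t + 1 - j)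
          = hS μ X u (t + 1) + ∑ j ∈ Finset.range (t + 2), hS μ X u j * Ehat μ X u j (t + 1 - j) := by
        rw [← hss]; ring
      rw [hfin, hstar μ X u hmeas hint hdep (t + 1), ← hA μ X u hmeas hint hdep (t + 1)]
  exact key n le_rfl
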